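/- arXiv:0805.3080 — 3 statements merged into one kernel-verified Lean document; each statement's English description precedes it below -/
import Mathlib

section
/- Let m1, m2, n be positive integers with gcd(m1,n) = gcd(m2,n) = 1 and n ≥ 2, and let r, (b_l), (r_l), L and (μ_l) be the Hirzebruch–Jung data of (m1,m2,n). Then m1 + r·m2 is divisible by n (so μ_1 = (m1 + r·m2)/n is a positive integer), every term μ_0, μ_1, …, μ_{L+1} of the multiplicity sequence is a positive integer, and the final term satisfies μ_{L+1} = m1. -/
/-- The Hirzebruch–Jung data of a triple `(m1, m2, n)` of positive integers with
`gcd m1 n = gcd m2 n = 1` and `n ≥ 2`.  Our indexing of the remainder sequence is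
shifted by one: `r k` denotes the remainder `r_{k-1}` of the paper, so `r 0 = n`
(that is, `r_{-1} = n`), `r 1` is the unique integer `r` with `0 < r < n` and
`m1 + r * m2 ≡ 0 (mod n)`, and the Jung–Hirzebruch recursion
`r_{l+1} = b_{l+1} * r_l - r_{l-1}` with `b_{l+1} = ⌈r_{l-1} / r_l⌉` reads
`r (l+1) = b l * r l - r (l-1)` for `1 ≤ l ≤ L`.  `L` is the least index with
`r_L = 0`, i.e. `r (L+1) = 0` and all earlier terms are positive.  The multiplicity
sequence is indexed without shift: `μ 0 = m2`, `μ 1 = (m1 + r * m2) / n` and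
`μ (l+1) = b l * μ l - μ (l-1)` for `1 ≤ l ≤ L`. -/
structure HJData (m1 m2 n : ℕ) : Type where
  r : ℕ → ℤ
  b : ℕ → ℤ
  L : ℕ
  μ : ℕ → ℤ
  r_zero : r 0 = (n : ℤ)
  r_one_pos : 0 < r 1
  r_one_lt : r 1 < (n : ℤ)
  r_one_cong : (n : ℤ) ∣ ((m1 : ℤ) + r 1 * (m2 : ℤ))
  r_pos : ∀ k : ℕ, 1 ≤ k → k ≤ L → 0 < r k
  r_top : r (L + 1) = 0
  b_def : ∀ l : ℕ, 1 ≤ l → l ≤ L → b l = ⌈(r (l - 1) : ℚ) / (r l : ℚ)⌉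
  r_rec : ∀ l : ℕ, 1 ≤ l → l ≤ L → r (l + 1) = b l * r l - r (l - 1)
  mu_zero : μ 0 = (m2 : ℤ)
  mu_one : (n : ℤ) * μ 1 = (m1 : ℤ) + r 1 * (m2 : ℤ)
  mu_rec : ∀ l : ℕ, 1 ≤ l → l ≤ L → μ (l + 1) = b l * μ l - μ (l - 1)

/-- `n` divides `m1 + r * m2` (so `μ_1 = (m1 + r*m2)/n` is a
positive integer), every term `μ_0, …, μ_{L+1}` of the multiplicity sequence is
a positive integer, and `μ_{L+1} = m1`. -/
theorem stmt3 (m1 m2 n : ℕ) (hm1 : 0 < m1) (hm2 : 0 < m2) (hn : 2 ≤ n)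
    (h1 : Nat.Coprime m1 n) (h2 : Nat.Coprime m2 n) (hj : HJData m1 m2 n) :
    (n : ℤ) ∣ ((m1 : ℤ) + hj.r 1 * (m2 : ℤ)) ∧
    0 < hj.μ 1 ∧
    (∀ l : ℕ, l ≤ hj.L + 1 → 0 < hj.μ l) ∧
    hj.μ (hj.L + 1) = (m1 : ℤ) := by
  obtain ⟨r, b, L, μ, r_zero, r_one_pos, r_one_lt, r_one_cong, r_pos, r_top,
    b_def, r_rec, mu_zero, mu_one, mu_rec⟩ := hj
  dsimp only
  -- Wronskian invariant: r k * μ (k+1) - r (k+1) * μ k = m1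
  have hW : ∀ k : ℕ, k + 1 ≤ L + 1 → r k * μ (k + 1) - r (k + 1) * μ k = (m1 : ℤ) := by
    intro k
    induction k with
    | zero => intro _; rw [r_zero, mu_zero]; linarith [mu_one]
    | succ k ih =>
      intro hk
      have hr := r_rec (k + 1) (by omega) (by omega)
      have hm := mu_rec (k + 1) (by omega) (by omega)
      simp only [Nat.add_sub_cancel] at hr hm
      have ih' := ih (by omega)
      rw [hr, hm]
      linear_combination ih'
  -- positivity of μ
  have hμpos : ∀ l : ℕ, l ≤ L + 1 → 0 < μ l := by
    intro l
    induction l with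
    | zero => intro _; rw [mu_zero]; exact_mod_cast hm2
    | succ k ih =>
      intro hk
      have hW' := hW k hk
      have hμk := ih (by omega)
      have hrk : 0 < r k := by
        rcases Nat.eq_zero_or_pos k with h | h
        · subst h; rw [r_zero]; exact_mod_cast (by omega : 0 < n)
        · exact r_pos k h (by omega)
      have hrk1 : 0 ≤ r (k + 1) := by
        rcases eq_or_lt_of_le hk with h | h
        · rw [h, r_top]
        · exact le_of_lt (r_pos (k + 1) (by omega) (by omega))
      have hm1' : (0 : ℤ) < (m1 : ℤ) := by exact_mod_cast hm1
      nlinarith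
  -- r L divides every remainder
  have hdvd : ∀ k : ℕ, k ≤ L → r L ∣ r (L - k) ∧ r L ∣ r (L - k + 1) := by
    intro k
    induction k with
    | zero => intro _; simpa [r_top] using dvd_refl (r L)
    | succ k ih =>
      intro hk
      obtain ⟨h0, h1⟩ := ih (by omega)
      have hr := r_rec (L - k) (by omega) (by omega)
      have key : r (L - k - 1) = b (L - k) * r (L - k) - r (L - k + 1) := by
        have e : L - k - 1 + 1 = L - k := by omega
        have e2 : L - k - 1 = L - k - 1 := rfl
        have : r (L - k + 1) = b (L - k) * r (L - k) - r (L - k - 1) := hr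
        linarith
      have hd : r L ∣ r (L - k - 1) := by
        rw [key]; exact dvd_sub (h0.mul_left _) h1
      have e1 : L - (k + 1) = L - k - 1 := by omega
      have e2 : L - k - 1 + 1 = L - k := by omega
      rw [e1, e2]
      exact ⟨hd, h0⟩
  have hd0 : r L ∣ (n : ℤ) := by
    have := (hdvd L le_rfl).1
    rwa [Nat.sub_self, r_zero] at this
  have hd1 : r L ∣ r 1 := by
    rcases Nat.eq_zero_or_pos L with h | h
    · subst h
      have : r 1 = 0 := r_top
      simp [this]
    · have := (hdvd (L - 1) (by omega)).1
      have e : L - (L - 1) = 1 := by omega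
      rwa [e] at this
  have hdm1 : r L ∣ (m1 : ℤ) := by
    have hsum : r L ∣ ((m1 : ℤ) + r 1 * (m2 : ℤ)) := hd0.trans r_one_cong
    have := dvd_sub hsum (hd1.mul_right (m2 : ℤ))
    simpa using this
  have hrLpos : 0 < r L := by
    rcases Nat.eq_zero_or_pos L with h | h
    · subst h; rw [r_zero]; exact_mod_cast (by omega : 0 < n)
    · exact r_pos L h le_rfl
  have hrL1 : r L = 1 := by
    have hg : r L ∣ (1 : ℤ) := by
      have := Int.dvd_coe_gcd hdm1 hd0
      rwa [Int.gcd_natCast_natCast, h1, Nat.cast_one] at this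
    exact le_antisymm (Int.le_of_dvd one_pos hg) hrLpos
  have hfin : μ (L + 1) = (m1 : ℤ) := by
    have := hW L le_rfl
    rw [r_top, hrL1] at this
    linarith
  exact ⟨r_one_cong, hμpos 1 (by omega), hμpos, hfin⟩
end

section
/- Let m1 = 3 and m2 = 4. For every integer k ≥ 1, set n = 5 + 12k (so gcd(m1,n) = gcd(m2,n) = 1), and let r, (b_l), (r_l), L and (μ_l) be the Hirzebruch–Jung data of (3,4,n). Then L = k + 3 and the multiplicity sequence is μ_0 = 4, μ_1 = 3, μ_2 = 2, μ_l = 1 for 3 ≤ l ≤ k + 2, μ_{k+3} = 2, and μ_{k+4} = 3. -/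
/-- Explicit remainder sequence. -/
def Rs (k : ℕ) : ℕ → ℤ
  | 0 => 12 * (k : ℤ) + 5
  | 1 => 9 * (k : ℤ) + 3
  | 2 => 6 * (k : ℤ) + 1
  | (l + 3) => if l + 3 ≤ k + 2 then 3 * (k : ℤ) + 8 - 3 * ((l : ℤ) + 3)
               else if l + 3 = k + 3 then 1 else 0

/-- Explicit multiplicity sequence. -/
def Ms (k : ℕ) : ℕ → ℤ
  | 0 => 4
  | 1 => 3
  | 2 => 2
  | (l + 3) => if l + 3 ≤ k + 2 then 1
               else if l + 3 = k + 3 then 2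
               else if l + 3 = k + 4 then 3 else 0

/-- Explicit `b`-sequence. -/
def Bs (k : ℕ) : ℕ → ℤ
  | 0 => 0
  | 1 => 2
  | 2 => 2
  | 3 => if k = 1 then 4 else 3
  | (l + 4) => if l + 4 ≤ k + 1 then 2 else if l + 4 = k + 2 then 3 else 2

lemma Rs_pos (k l : ℕ) (hk : 1 ≤ k) (hl : l ≤ k + 3) : 0 < Rs k l := by
  rcases l with _ | _ | _ | m <;> simp only [Rs] <;> try split_ifs
  all_goals omega

lemma ceil_div_eq (a b c : ℤ) (hb : 0 < b) (h1 : (c - 1) * b < a) (h2 : a ≤ c * b) :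
    ⌈(a : ℚ) / (b : ℚ)⌉ = c := by
  have hbq : (0 : ℚ) < (b : ℚ) := by exact_mod_cast hb
  rw [Int.ceil_eq_iff]
  refine ⟨?_, ?_⟩
  · rw [lt_div_iff₀ hbq]; exact_mod_cast h1
  · rw [div_le_iff₀ hbq]; exact_mod_cast h2

lemma bval (k l : ℕ) (hk : 1 ≤ k) (hl : l + 1 ≤ k + 3) :
    ⌈(Rs k l : ℚ) / (Rs k (l + 1) : ℚ)⌉ = Bs k (l + 1) := by
  apply ceil_div_eq _ _ _ (Rs_pos k (l + 1) hk (by omega)) <;>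
    · rcases l with _ | _ | _ | m <;> simp only [Rs, Bs] <;> try split_ifs
      all_goals omega

lemma rstep (k l : ℕ) (hk : 1 ≤ k) (hl : l + 1 ≤ k + 3) :
    Bs k (l + 1) * Rs k (l + 1) - Rs k l = Rs k (l + 2) := by
  rcases l with _ | _ | _ | m <;> simp only [Rs, Bs] <;> try split_ifs
  all_goals omega

lemma mustep (k l : ℕ) (hk : 1 ≤ k) (hl : l + 1 ≤ k + 3) :
    Bs k (l + 1) * Ms k (l + 1) - Ms k l = Ms k (l + 2) := by
  rcases l with _ | _ | _ | m <;> simp only [Ms, Bs] <;> try split_ifs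
  all_goals omega
/-- For `n = 5 + 12k`, `k ≥ 1`, the Hirzebruch–Jung data of
`(3, 4, n)` has `L = k + 3` and multiplicity sequence
`4, 3, 2, 1, …, 1, 2, 3` (with `k` entries equal to `1`). -/
theorem stmt11 (k : ℕ) (hk : 1 ≤ k) (hj : HJData 3 4 (5 + 12 * k)) :
    hj.L = k + 3 ∧ hj.μ 0 = 4 ∧ hj.μ 1 = 3 ∧ hj.μ 2 = 2 ∧
    (∀ l : ℕ, 3 ≤ l → l ≤ k + 2 → hj.μ l = 1) ∧
    hj.μ (k + 3) = 2 ∧ hj.μ (k + 4) = 3 := by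
  -- r 1 = 9k + 3
  have hr1 : hj.r 1 = 9 * (k : ℤ) + 3 := by
    have h1 := hj.r_one_pos
    have h2 := hj.r_one_lt
    have h3 := hj.r_one_cong
    have hd : ((5 + 12 * k : ℕ) : ℤ) ∣ (hj.r 1 - (9 * (k : ℤ) + 3)) * 4 := by
      have heq : (hj.r 1 - (9 * (k : ℤ) + 3)) * 4
          = (((3:ℕ) : ℤ) + hj.r 1 * ((4:ℕ) : ℤ)) - ((5 + 12 * k : ℕ) : ℤ) * 3 := by
        push_cast; ring
      rw [heq]
      exact dvd_sub h3 (Dvd.intro 3 rfl)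
    have hcop : IsCoprime ((5 + 12 * k : ℕ) : ℤ) (4 : ℤ) := by
      rw [Int.isCoprime_iff_gcd_eq_one]
      have : Int.gcd ((5 + 12 * k : ℕ) : ℤ) (4 : ℤ) = Nat.gcd (5 + 12 * k) 4 := by
        rw [show ((4:ℤ)) = ((4:ℕ) : ℤ) by norm_num, Int.gcd_natCast_natCast]
      rw [this, Nat.gcd_comm, Nat.gcd_rec]
      have h4 : (5 + 12 * k) % 4 = 1 := by omega
      rw [h4]
      simp
    have hdvd : ((5 + 12 * k : ℕ) : ℤ) ∣ (hj.r 1 - (9 * (k : ℤ) + 3)) :=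
      hcop.dvd_of_dvd_mul_right hd
    have habs : |hj.r 1 - (9 * (k : ℤ) + 3)| < ((5 + 12 * k : ℕ) : ℤ) := by
      rw [abs_lt]; push_cast at h2 ⊢; omega
    have := Int.eq_zero_of_abs_lt_dvd hdvd habs
    omega
  -- the main induction computing r
  have hmain : ∀ l, l ≤ k + 4 → l ≤ hj.L + 1 → hj.r l = Rs k l := by
    intro l
    induction l using Nat.strong_induction_on with
    | _ l ih =>
      intro hl hL
      match l with
      | 0 => rw [hj.r_zero]; simp only [Rs]; push_cast; ring
      | 1 => rw [hr1]; simp only [Rs]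
      | (m + 2) =>
        have hm1 : 1 ≤ m + 1 := by omega
        have hmL : m + 1 ≤ hj.L := by omega
        have hrec := hj.r_rec (m + 1) hm1 hmL
        have hbdef := hj.b_def (m + 1) hm1 hmL
        have hprev : hj.r m = Rs k m := ih m (by omega) (by omega) (by omega)
        have hcur : hj.r (m + 1) = Rs k (m + 1) := ih (m + 1) (by omega) (by omega) (by omega)
        have hsub : m + 1 - 1 = m := by omega
        rw [hsub] at hrec hbdef
        rw [hprev, hcur] at hbdef
        rw [hrec, hbdef, hcur, hprev, bval k m hk (by omega), rstep k m hk (by omega)]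
  -- L = k + 3
  have hL : hj.L = k + 3 := by
    have hge : ¬ hj.L ≤ k + 2 := by
      intro h
      have h0 := hj.r_top
      have := hmain (hj.L + 1) (by omega) (by omega)
      have hpos := Rs_pos k (hj.L + 1) hk (by omega)
      omega
    have hle : hj.L ≤ k + 3 := by
      by_contra h
      have hpos := hj.r_pos (k + 4) (by omega) (by omega)
      have heq := hmain (k + 4) (by omega) (by omega)
      have hz : Rs k (k + 4) = 0 := by
        simp only [show k + 4 = (k + 1) + 3 by omega, Rs]
        split_ifs <;> omega
      omega
    omega
  -- b values
  have hb : ∀ l, 1 ≤ l → l ≤ k + 3 → hj.b l = Bs k l := by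
    intro l h1 h2
    obtain ⟨m, rfl⟩ : ∃ m, l = m + 1 := ⟨l - 1, by omega⟩
    have hbdef := hj.b_def (m + 1) (by omega) (by omega)
    have hsub : m + 1 - 1 = m := by omega
    rw [hsub, hmain m (by omega) (by omega), hmain (m + 1) (by omega) (by omega),
      bval k m hk (by omega)] at hbdef
    exact hbdef
  -- μ values
  have hmu : ∀ l, l ≤ k + 4 → hj.μ l = Ms k l := by
    intro l
    induction l using Nat.strong_induction_on with
    | _ l ih =>
      intro hl
      match l with
      | 0 => rw [hj.mu_zero]; simp only [Ms]; norm_num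
      | 1 =>
        have h1 := hj.mu_one
        rw [hr1] at h1
        have hne : ((5 + 12 * k : ℕ) : ℤ) ≠ 0 := by push_cast; omega
        have h3 : ((5 + 12 * k : ℕ) : ℤ) * hj.μ 1 = ((5 + 12 * k : ℕ) : ℤ) * 3 := by
          rw [h1]; push_cast; ring
        have := mul_left_cancel₀ hne h3
        rw [this]; simp only [Ms]
      | (m + 2) =>
        have hrec := hj.mu_rec (m + 1) (by omega) (by omega)
        have hsub : m + 1 - 1 = m := by omega
        rw [hsub] at hrec
        rw [hrec, hb (m + 1) (by omega) (by omega), ih m (by omega) (by omega),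
          ih (m + 1) (by omega) (by omega), mustep k m hk (by omega)]
  refine ⟨hL, ?_, ?_, ?_, ?_, ?_, ?_⟩
  · rw [hmu 0 (by omega)]; simp [Ms]
  · rw [hmu 1 (by omega)]; simp [Ms]
  · rw [hmu 2 (by omega)]; simp [Ms]
  · intro l h1 h2
    rw [hmu l (by omega)]
    obtain ⟨m, rfl⟩ : ∃ m, l = m + 3 := ⟨l - 3, by omega⟩
    simp only [Ms]; split_ifs <;> omega
  · rw [hmu (k + 3) (by omega)]
    obtain ⟨m, hm⟩ : ∃ m, k + 3 = m + 3 := ⟨k, rfl⟩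
    rw [hm]; simp only [Ms]; split_ifs <;> omega
  · rw [hmu (k + 4) (by omega)]
    obtain ⟨m, hm⟩ : ∃ m, k + 4 = m + 3 := ⟨k + 1, rfl⟩
    rw [hm]; simp only [Ms]; split_ifs <;> omega
end

section
/- Let m1 = 2 and m2 = 3, and for an integer n ≥ 2 coprime to 6 let r, (b_l), (r_l), L and (μ_l) be the Hirzebruch–Jung data of (2,3,n), and for a field F of characteristic zero containing a primitive n-th root of unity ξ let Tr_σ(ξ) = Σ_{l=1}^{L} Σ_{k=1}^{μ_l} Tr_l^k(ξ) be defined via χ = ξ^{α_1} (α_1·2 ≡ 1 mod n) by: for 2 ≤ l ≤ L−1, Tr_l^k(ξ) = χ^{r_{l−2}(μ_l−k)}/(1−χ^{−r_{l−1}}) + χ^{−r_l(μ_l−k)+r_{l−1}μ_{l+1}}/(1−χ^{r_{l−1}}); Tr_1^k(ξ) = 1/(1−χ^{−r_0}) + χ^{−r_1(μ_1−k)+r_0·μ_2}/(1−χ^{r_0}); Tr_L^k(ξ) = χ^{r_{L−2}(μ_L−k)}/(1−χ^{−r_{L−1}}) + 1/(1−χ^{r_{L−1}}). Then there exists N such that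 for all n ≥ N: (1) if n ≡ 1 (mod 6), the multiplicity sequence satisfies μ_0 = 3, μ_1 = 2, μ_l = 1 for 2 ≤ l ≤ L, μ_{L+1} = 2, and Tr_σ(ξ) = 2 + ξ^{α_3}, where α_3 is the inverse of 3 modulo n; (2) if n ≡ 5 (mod 6), the multiplicity sequence satisfies μ_0 = 3, μ_l = 1 for 1 ≤ l ≤ L, μ_{L+1} = 2, and Tr_σ(ξ) = 1. -/
/-- The summand `Tr_l^k(ξ)` of the trace contribution of a tame cyclic quotient
singularity, written in terms of the Hirzebruch–Jung data `hj` and `χ = ξ^{α₁}`.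
Recall the index shift: the paper's `r_j` is `hj.r (j+1)`. -/
noncomputable def TrTerm {m1 m2 n : ℕ} (hj : HJData m1 m2 n) {F : Type*} [Field F]
    (χ : F) (l k : ℕ) : F :=
  if l = 1 then
    1 / (1 - χ ^ (-(hj.r 1))) +
      χ ^ (-(hj.r 2) * (hj.μ 1 - (k : ℤ)) + hj.r 1 * hj.μ 2) / (1 - χ ^ (hj.r 1))
  else if l = hj.L then
    χ ^ (hj.r (hj.L - 1) * (hj.μ hj.L - (k : ℤ))) / (1 - χ ^ (-(hj.r hj.L))) +
      1 / (1 - χ ^ (hj.r hj.L))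
  else
    χ ^ (hj.r (l - 1) * (hj.μ l - (k : ℤ))) / (1 - χ ^ (-(hj.r l))) +
      χ ^ (-(hj.r (l + 1)) * (hj.μ l - (k : ℤ)) + hj.r l * hj.μ (l + 1)) /
        (1 - χ ^ (hj.r l))

/-- `Tr_σ(ξ) = Σ_{l=1}^{L} Σ_{k=1}^{μ_l} Tr_l^k(ξ)`. -/
noncomputable def TrSigma {m1 m2 n : ℕ} (hj : HJData m1 m2 n) {F : Type*} [Field F]
    (χ : F) : F :=
  ∑ l ∈ Finset.Icc 1 hj.L, ∑ k ∈ Finset.Icc 1 (hj.μ l).toNat, TrTerm hj χ l k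

private lemma ceilQ (a b c : ℤ) (hb : 0 < b) (h1 : b*(c-1) < a) (h2 : a ≤ b*c) :
    ⌈(a:ℚ)/(b:ℚ)⌉ = c := by
  have hb' : (0:ℚ) < (b:ℚ) := by exact_mod_cast hb
  rw [Int.ceil_eq_iff]
  constructor
  · rw [lt_div_iff₀ hb']
    have : ((b*(c-1) : ℤ) : ℚ) < ((a:ℤ):ℚ) := by exact_mod_cast h1
    push_cast at this ⊢; linarith
  · rw [div_le_iff₀ hb']
    have : ((a:ℤ):ℚ) ≤ ((b*c : ℤ):ℚ) := by exact_mod_cast h2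
    push_cast at this ⊢; linarith

private lemma mid_sum {F : Type*} [Field F] (x : F) (h0 : x ≠ 0) (h1 : x ≠ 1) :
    1/(1 - x⁻¹) + x/(1-x) = 0 := by
  have h3 : 1 - x ≠ 0 := sub_ne_zero.mpr (Ne.symm h1)
  have h4 : x - 1 ≠ 0 := sub_ne_zero.mpr h1
  have h5 : 1 - x⁻¹ = (x - 1)/x := by field_simp
  rw [h5, one_div_div]
  field_simp
  ring

private lemma L_sum {F : Type*} [Field F] (x : F) (h0 : x ≠ 0) (h1 : x ≠ 1) :
    1/(1 - x⁻¹) + 1/(1-x) = 1 := by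
  have h3 : 1 - x ≠ 0 := sub_ne_zero.mpr (Ne.symm h1)
  have h4 : x - 1 ≠ 0 := sub_ne_zero.mpr h1
  have h5 : 1 - x⁻¹ = (x - 1)/x := by field_simp
  rw [h5, one_div_div]
  field_simp
  ring

private lemma one_sum {F : Type*} [Field F] (x : F) (h0 : x ≠ 0) (h1 : x ≠ 1) :
    1/(1 - x⁻¹) + x⁻¹/(1-x) = 1 + x⁻¹ := by
  have h3 : 1 - x ≠ 0 := sub_ne_zero.mpr (Ne.symm h1)
  have h4 : x - 1 ≠ 0 := sub_ne_zero.mpr h1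
  have h5 : 1 - x⁻¹ = (x - 1)/x := by field_simp
  rw [h5, one_div_div]
  field_simp
  ring

private lemma hj_struct {n : ℕ} (hj : HJData 2 3 n) (t : ℕ) (ht : 3 ≤ t)
    (hr2 : hj.r 2 = 2*(t:ℤ) - 1) (hr3 : hj.r 3 = 2*(t:ℤ) - 3)
    (hm2 : hj.μ 2 = 1) (hm3 : hj.μ 3 = 1) :
    (∀ k : ℕ, 2 ≤ k → k ≤ hj.L → hj.r k = 2*(t:ℤ) + 3 - 2*(k:ℤ) ∧ hj.μ k = 1)
    ∧ hj.L = t + 1 ∧ hj.μ (hj.L + 1) = 2 := by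
  have ht' : (3:ℤ) ≤ (t:ℤ) := by exact_mod_cast ht
  have hL3 : 3 ≤ hj.L := by
    by_contra h
    have htop := hj.r_top
    interval_cases h : hj.L
    · have := hj.r_one_pos; norm_num at htop; omega
    · norm_num at htop; rw [hr2] at htop; omega
    · norm_num at htop; rw [hr3] at htop; omega
  have pair : ∀ k : ℕ, 2 ≤ k → (k + 1 ≤ hj.L →
      hj.r k = 2*(t:ℤ)+3-2*(k:ℤ) ∧ hj.μ k = 1 ∧
      hj.r (k+1) = 2*(t:ℤ)+1-2*(k:ℤ) ∧ hj.μ (k+1) = 1) := by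
    intro k hk
    induction k, hk using Nat.le_induction with
    | base =>
      intro _
      refine ⟨by rw [hr2]; push_cast; ring, hm2, by rw [hr3]; push_cast; ring, hm3⟩
    | succ k hk ih =>
      intro hk2L
      obtain ⟨h1, h2, h3, h4⟩ := ih (by omega)
      have hbd := hj.b_def (k+1) (by omega) (by omega)
      have hrr := hj.r_rec (k+1) (by omega) (by omega)
      have hmr := hj.mu_rec (k+1) (by omega) (by omega)
      simp only [Nat.add_sub_cancel] at hbd hrr hmr
      have hrpos : 0 < hj.r (k+1) := hj.r_pos (k+1) (by omega) (by omega)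
      by_cases hc : k = t
      · exfalso
        have hb3 : hj.b (k+1) = 3 := by
          rw [hbd, h1, h3, hc]
          have e1 : 2*(t:ℤ)+3-2*(t:ℤ) = 3 := by ring
          have e2 : 2*(t:ℤ)+1-2*(t:ℤ) = 1 := by ring
          rw [e1, e2]
          exact ceilQ 3 1 3 (by norm_num) (by norm_num) (by norm_num)
        have hr0 : hj.r (k+2) = 0 := by
          rw [show k+2 = (k+1)+1 from rfl, hrr, hb3, h3, h1, hc]; ring
        have := hj.r_pos (k+2) (by omega) (by omega)
        omega
      · have hklt : k < t := by
          have : (0:ℤ) < 2*(t:ℤ)+1-2*(k:ℤ) := h3 ▸ hrpos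
          omega
        have hb2 : hj.b (k+1) = 2 := by
          rw [hbd, h1, h3]
          exact ceilQ _ _ 2 (by omega) (by push_cast; omega) (by push_cast; omega)
        have hr' : hj.r (k+2) = 2*(t:ℤ)+1-2*((k:ℤ)+1) := by
          rw [show k+2 = (k+1)+1 from rfl, hrr, hb2, h3, h1]; ring
        have hm' : hj.μ (k+2) = 1 := by
          rw [show k+2 = (k+1)+1 from rfl, hmr, hb2, h4, h2]; ring
        refine ⟨by rw [h3]; push_cast; ring, h4, by rw [hr']; push_cast; ring, hm'⟩
  have full : ∀ k : ℕ, 2 ≤ k → k ≤ hj.L →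
      hj.r k = 2*(t:ℤ) + 3 - 2*(k:ℤ) ∧ hj.μ k = 1 := by
    intro k hk hkL
    rcases eq_or_lt_of_le hk with h | h
    · exact ⟨by rw [← h, hr2]; push_cast; ring, by rw [← h]; exact hm2⟩
    · obtain ⟨_, _, h3, h4⟩ := pair (k-1) (by omega) (by omega)
      have hk1 : k - 1 + 1 = k := by omega
      rw [hk1] at h3 h4
      have hcast : ((k-1 : ℕ):ℤ) = (k:ℤ) - 1 := by omega
      rw [hcast] at h3
      exact ⟨by rw [h3]; ring, h4⟩
  have hLle : hj.L ≤ t + 1 := by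
    by_contra h
    push_neg at h
    obtain ⟨hrt, _⟩ := full t (by omega) (by omega)
    obtain ⟨hrt1, _⟩ := full (t+1) (by omega) (by omega)
    have hb3 : hj.b (t+1) = 3 := by
      rw [hj.b_def (t+1) (by omega) (by omega), Nat.add_sub_cancel, hrt, hrt1]
      have e1 : 2*(t:ℤ)+3-2*(t:ℤ) = 3 := by ring
      have e2 : 2*(t:ℤ)+3-2*((t:ℤ)+1) = 1 := by ring
      rw [e1, show ((t+1:ℕ):ℤ) = (t:ℤ)+1 by push_cast; ring, e2]
      exact ceilQ 3 1 3 (by norm_num) (by norm_num) (by norm_num)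
    have hr0 : hj.r (t+2) = 0 := by
      rw [show t+2 = (t+1)+1 from rfl, hj.r_rec (t+1) (by omega) (by omega),
        Nat.add_sub_cancel, hb3, hrt, hrt1,
        show ((t+1:ℕ):ℤ) = (t:ℤ)+1 by push_cast; ring]
      ring
    have := hj.r_pos (t+2) (by omega) (by omega)
    omega
  have hLge : t + 1 ≤ hj.L := by
    by_contra h
    push_neg at h
    have hLt : hj.L ≤ t := by omega
    obtain ⟨hrL, _⟩ := full hj.L (by omega) le_rfl
    obtain ⟨hrL1, _⟩ := full (hj.L - 1) (by omega) (by omega)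
    have hcast : ((hj.L - 1 : ℕ):ℤ) = (hj.L:ℤ) - 1 := by omega
    rw [hcast] at hrL1
    have hLcast : (3:ℤ) ≤ (hj.L:ℤ) := by exact_mod_cast hL3
    have hLtcast : (hj.L:ℤ) ≤ (t:ℤ) := by exact_mod_cast hLt
    have hb2 : hj.b hj.L = 2 := by
      rw [hj.b_def hj.L (by omega) le_rfl, hrL, hrL1]
      exact ceilQ _ _ 2 (by omega) (by omega) (by omega)
    have := hj.r_top
    rw [hj.r_rec hj.L (by omega) le_rfl, hb2, hrL, hrL1] at this
    omega
  have hL : hj.L = t + 1 := by omega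
  refine ⟨full, hL, ?_⟩
  obtain ⟨hrt, hmt⟩ := full t (by omega) (by omega)
  obtain ⟨hrt1, hmt1⟩ := full (t+1) (by omega) (by omega)
  have hb3 : hj.b (t+1) = 3 := by
    rw [hj.b_def (t+1) (by omega) (by omega), Nat.add_sub_cancel, hrt, hrt1,
      show ((t+1:ℕ):ℤ) = (t:ℤ)+1 by push_cast; ring]
    have e1 : 2*(t:ℤ)+3-2*(t:ℤ) = 3 := by ring
    have e2 : 2*(t:ℤ)+3-2*((t:ℤ)+1) = 1 := by ring
    rw [e1, e2]
    exact ceilQ 3 1 3 (by norm_num) (by norm_num) (by norm_num)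
  rw [hL, hj.mu_rec (t+1) (by omega) (by omega), Nat.add_sub_cancel, hb3, hmt, hmt1]
  ring

private lemma trace_eval {n : ℕ} (hj : HJData 2 3 n) {F : Type} [Field F] (χ : F)
    (t : ℕ) (ht : 3 ≤ t) (hL : hj.L = t + 1)
    (hfull : ∀ k : ℕ, 2 ≤ k → k ≤ hj.L → hj.r k = 2*(t:ℤ)+3-2*(k:ℤ) ∧ hj.μ k = 1)
    (hχ0 : χ ≠ 0)
    (hne : ∀ m : ℤ, 0 < m → m ≤ 2*(t:ℤ)+1 → χ ^ m ≠ 1) :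
    TrSigma hj χ = (∑ k ∈ Finset.Icc 1 (hj.μ 1).toNat, TrTerm hj χ 1 k) + 1 := by
  have hL4 : 4 ≤ hj.L := by omega
  have key : ∀ l ∈ Finset.Icc 1 hj.L,
      (∑ k ∈ Finset.Icc 1 (hj.μ l).toNat, TrTerm hj χ l k) =
      (if l = 1 then (∑ k ∈ Finset.Icc 1 (hj.μ 1).toNat, TrTerm hj χ 1 k) else 0) +
      (if l = hj.L then 1 else 0) := by
    intro l hl
    rw [Finset.mem_Icc] at hl
    by_cases h1 : l = 1
    · subst h1
      rw [if_pos rfl, if_neg (by omega), add_zero]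
    · rw [if_neg h1]
      by_cases h2 : l = hj.L
      · subst h2
        rw [if_pos rfl, zero_add]
        obtain ⟨hrL, hmL⟩ := hfull hj.L (by omega) le_rfl
        have hrLval : hj.r hj.L = 1 := by rw [hrL, hL]; push_cast; ring
        rw [hmL]
        have : ((1:ℤ)).toNat = 1 := rfl
        rw [this, Finset.Icc_self, Finset.sum_singleton]
        rw [TrTerm, if_neg h1, if_pos rfl, hmL, hrLval]
        have e : hj.r (hj.L - 1) * (1 - ((1:ℕ):ℤ)) = 0 := by push_cast; ring
        rw [e, zpow_zero]
        have hx1 : χ ^ (1:ℤ) ≠ 1 := hne 1 one_pos (by omega)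
        rw [zpow_neg]
        exact L_sum (χ ^ (1:ℤ)) (zpow_ne_zero _ hχ0) hx1
      · rw [if_neg h2, add_zero]
        have hl2 : 2 ≤ l := by omega
        obtain ⟨hrl, hml⟩ := hfull l hl2 (by omega)
        obtain ⟨_, hml1⟩ := hfull (l+1) (by omega) (by omega)
        rw [hml]
        rw [show ((1:ℤ)).toNat = 1 from rfl, Finset.Icc_self, Finset.sum_singleton]
        rw [TrTerm, if_neg h1, if_neg h2, hml, hml1]
        have e1 : hj.r (l - 1) * (1 - ((1:ℕ):ℤ)) = 0 := by push_cast; ring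
        have e2 : -hj.r (l+1) * (1 - ((1:ℕ):ℤ)) + hj.r l * 1 = hj.r l := by push_cast; ring
        rw [e1, e2, zpow_zero, zpow_neg]
        have hcastl : (2:ℤ) ≤ (l:ℤ) := by exact_mod_cast hl2
        have hcastl2 : (l:ℤ) ≤ (t:ℤ) := by
          have : l ≤ t := by omega
          exact_mod_cast this
        have hx1 : χ ^ (hj.r l) ≠ 1 := by
          apply hne _ (by omega) (by omega)
        exact mid_sum (χ ^ (hj.r l)) (zpow_ne_zero _ hχ0) hx1
  rw [TrSigma, Finset.sum_congr rfl key, Finset.sum_add_distrib,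
    Finset.sum_ite_eq' _ 1, Finset.sum_ite_eq' _ hj.L,
    if_pos (Finset.mem_Icc.mpr ⟨le_refl 1, by omega⟩),
    if_pos (Finset.mem_Icc.mpr ⟨by omega, le_rfl⟩)]

/-- Explicit multiplicity sequences and trace contributions
for the tame cyclic quotient singularities `(2, 3, n)` with `n` large and
coprime to `6`. -/
theorem stmt12 :
    ∃ N : ℤ, ∀ n : ℕ, N ≤ (n : ℤ) → 2 ≤ n → Nat.Coprime n 6 →
      ∀ hj : HJData 2 3 n,
        ∀ (F : Type) [Field F] [CharZero F] (ξ : F), IsPrimitiveRoot ξ n →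
          ∀ α1 α3 : ℕ, α1 * 2 ≡ 1 [MOD n] → α3 * 3 ≡ 1 [MOD n] →
            (n % 6 = 1 →
              hj.μ 0 = 3 ∧ hj.μ 1 = 2 ∧
              (∀ l : ℕ, 2 ≤ l → l ≤ hj.L → hj.μ l = 1) ∧
              hj.μ (hj.L + 1) = 2 ∧
              TrSigma hj (ξ ^ α1) = 2 + ξ ^ α3) ∧
            (n % 6 = 5 →
              hj.μ 0 = 3 ∧
              (∀ l : ℕ, 1 ≤ l → l ≤ hj.L → hj.μ l = 1) ∧
              hj.μ (hj.L + 1) = 2 ∧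
              TrSigma hj (ξ ^ α1) = 1) := by
  refine ⟨100, ?_⟩
  intro n hN h2n hcop hj F _ _ ξ hξ α1 α3 hα1 hα3
  have hn100 : 100 ≤ n := by exact_mod_cast hN
  have hξ0 : ξ ≠ 0 := hξ.ne_zero (by omega)
  have hχ0 : (ξ ^ α1 : F) ≠ 0 := pow_ne_zero _ hξ0
  -- coprimality of n and α1 over ℤ
  have hdvd1 : (n:ℤ) ∣ (1:ℤ) - ((α1 * 2 : ℕ):ℤ) := Nat.modEq_iff_dvd.mp hα1
  obtain ⟨c, hc⟩ := hdvd1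
  have hcoInt : IsCoprime (n:ℤ) (α1:ℤ) := ⟨c, 2, by push_cast at hc ⊢; linarith⟩
  have hχpow : ∀ m : ℤ, 0 < m → m < (n:ℤ) → (ξ ^ α1 : F) ^ m ≠ 1 := by
    intro m hm hmn h1
    lift m to ℕ using le_of_lt hm
    rw [zpow_natCast, ← pow_mul] at h1
    have hdvd : n ∣ α1 * m := (hξ.pow_eq_one_iff_dvd _).mp h1
    have hdvdZ : (n:ℤ) ∣ (α1:ℤ) * (m:ℤ) := by exact_mod_cast hdvd
    have hnm : (n:ℤ) ∣ (m:ℤ) := hcoInt.dvd_of_dvd_mul_left hdvdZ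
    have hm' : (0:ℤ) < (m:ℤ) := hm
    have := Int.le_of_dvd hm' hnm
    omega
  have hχn : (ξ ^ α1 : F) ^ n = 1 := by
    rw [← pow_mul, mul_comm, pow_mul, hξ.pow_eq_one, one_pow]
  have hpm : ∀ a : ℕ, ξ ^ a = ξ ^ (a % n) := by
    intro a
    conv_lhs => rw [← Nat.div_add_mod a n]
    rw [pow_add, pow_mul, hξ.pow_eq_one, one_pow, one_mul]
  have hL1 : 1 ≤ hj.L := by
    by_contra h
    have h0 : hj.L = 0 := by omega
    have htz := hj.r_top
    rw [h0] at htz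
    norm_num at htz
    have := hj.r_one_pos
    rw [htz] at this
    exact lt_irrefl 0 this
  have hcop3 : IsCoprime (n:ℤ) 3 := by
    rw [show (3:ℤ) = ((3:ℕ):ℤ) from rfl]
    exact Nat.isCoprime_iff_coprime.mpr (Nat.Coprime.coprime_dvd_right (by norm_num) hcop)
  have hcop6 : IsCoprime (n:ℤ) 6 := by
    rw [show (6:ℤ) = ((6:ℕ):ℤ) from rfl]
    exact Nat.isCoprime_iff_coprime.mpr hcop
  constructor
  · -- case n ≡ 1 (mod 6)
    intro hmod
    obtain ⟨t, htn⟩ : ∃ t, n = 6*t+1 := ⟨n/6, by omega⟩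
    have ht16 : 16 ≤ t := by omega
    have hnZ : (n:ℤ) = 6*(t:ℤ)+1 := by rw [htn]; push_cast; ring
    have ht0 : (0:ℤ) ≤ (t:ℤ) := by positivity
    have ht16' : (16:ℤ) ≤ (t:ℤ) := by exact_mod_cast ht16
    -- r 1 = 4t
    have hr1 : hj.r 1 = 4*(t:ℤ) := by
      have hcong := hj.r_one_cong
      have hdv : (n:ℤ) ∣ 3 * (hj.r 1 - 4*(t:ℤ)) := by
        have heq : 3 * (hj.r 1 - 4*(t:ℤ)) =
            (((2:ℕ):ℤ) + hj.r 1 * ((3:ℕ):ℤ)) - 2 * (n:ℤ) := by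
          rw [hnZ]; push_cast; ring
        rw [heq]
        exact dvd_sub hcong ⟨2, by ring⟩
      obtain ⟨d, hd⟩ := hcop3.dvd_of_dvd_mul_left hdv
      have h1 := hj.r_one_pos
      have h2 := hj.r_one_lt
      have hd0 : d = 0 := by
        rcases lt_trichotomy d 0 with h | h | h
        · have hb : (n:ℤ) * d ≤ (n:ℤ) * (-1) :=
            mul_le_mul_of_nonneg_left (by omega) (by positivity)
          rw [hnZ] at *
          linarith
        · exact h
        · have hb : (n:ℤ) * 1 ≤ (n:ℤ) * d :=
            mul_le_mul_of_nonneg_left (by omega) (by positivity)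
          rw [hnZ] at *
          linarith
      rw [hd0, mul_zero] at hd
      linarith
    have hnne : (n:ℤ) ≠ 0 := by rw [hnZ]; omega
    have hμ1 : hj.μ 1 = 2 := by
      apply mul_left_cancel₀ hnne
      rw [hj.mu_one, hr1, hnZ]; push_cast; ring
    have hb1 : hj.b 1 = 2 := by
      rw [hj.b_def 1 le_rfl hL1, show (1:ℕ)-1 = 0 from rfl, hj.r_zero, hr1, hnZ]
      exact ceilQ _ _ 2 (by omega) (by omega) (by omega)
    have hr2 : hj.r 2 = 2*(t:ℤ) - 1 := by
      have hrec := hj.r_rec 1 le_rfl hL1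
      rw [show (1:ℕ)-1 = 0 from rfl, hj.r_zero, hr1, hb1, hnZ] at hrec
      norm_num at hrec; omega
    have hL2 : 2 ≤ hj.L := by
      by_contra h
      have hL1' : hj.L = 1 := by omega
      have htz := hj.r_top
      rw [hL1', show (1:ℕ)+1 = 2 from rfl, hr2] at htz
      omega
    have hμ2 : hj.μ 2 = 1 := by
      have hrec := hj.mu_rec 1 le_rfl hL1
      rw [show (1:ℕ)-1 = 0 from rfl, hj.mu_zero, hμ1, hb1] at hrec
      norm_num at hrec; omega
    have hb2 : hj.b 2 = 3 := by
      rw [hj.b_def 2 (by omega) hL2, show (2:ℕ)-1 = 1 from rfl, hr1, hr2]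
      exact ceilQ _ _ 3 (by omega) (by omega) (by omega)
    have hr3 : hj.r 3 = 2*(t:ℤ) - 3 := by
      have hrec := hj.r_rec 2 (by omega) hL2
      rw [show (2:ℕ)-1 = 1 from rfl, hr1, hr2, hb2] at hrec
      norm_num at hrec; omega
    have hμ3 : hj.μ 3 = 1 := by
      have hrec := hj.mu_rec 2 (by omega) hL2
      rw [show (2:ℕ)-1 = 1 from rfl, hμ1, hμ2, hb2] at hrec
      norm_num at hrec; omega
    obtain ⟨hfull, hL, hμL1⟩ := hj_struct hj t (by omega) hr2 hr3 hμ2 hμ3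
    refine ⟨by rw [hj.mu_zero]; norm_num, hμ1,
      fun l hl1 hl2 => (hfull l hl1 hl2).2, hμL1, ?_⟩
    have htr := trace_eval hj (ξ ^ α1) t (by omega) hL hfull hχ0
      (fun m hm hmle => hχpow m hm (by omega))
    rw [htr]
    have hT : ∀ k : ℕ, TrTerm hj (ξ ^ α1 : F) 1 k =
        1 / (1 - (ξ ^ α1 : F) ^ (-(hj.r 1))) +
        (ξ ^ α1 : F) ^ (-(hj.r 2) * (hj.μ 1 - (k : ℤ)) + hj.r 1 * hj.μ 2) /
          (1 - (ξ ^ α1 : F) ^ (hj.r 1)) := fun k => if_pos rfl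
    rw [hμ1, show ((2:ℤ)).toNat = 2 from rfl,
      show Finset.Icc 1 2 = ({1, 2} : Finset ℕ) from rfl,
      Finset.sum_pair (by norm_num : (1:ℕ) ≠ 2), hT 1, hT 2, hμ1, hμ2, hr1, hr2]
    have e1 : -(2*(t:ℤ)-1) * (2 - ((1:ℕ):ℤ)) + 4*(t:ℤ) * 1 = 2*(t:ℤ)+1 := by
      push_cast; ring
    have e2 : -(2*(t:ℤ)-1) * (2 - ((2:ℕ):ℤ)) + 4*(t:ℤ) * 1 = 4*(t:ℤ) := by
      push_cast; ring
    rw [e1, e2, zpow_neg]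
    have hx0 : ((ξ ^ α1 : F) ^ (4*(t:ℤ))) ≠ 0 := zpow_ne_zero _ hχ0
    have hx1 : ((ξ ^ α1 : F) ^ (4*(t:ℤ))) ≠ 1 := hχpow _ (by omega) (by omega)
    have hxy : (ξ ^ α1 : F) ^ (4*(t:ℤ)) * (ξ ^ α1 : F) ^ (2*(t:ℤ)+1) = 1 := by
      rw [← zpow_add₀ hχ0, show 4*(t:ℤ) + (2*(t:ℤ)+1) = ((n:ℕ):ℤ) by rw [hnZ]; ring,
        zpow_natCast]
      exact hχn
    have hyx : (ξ ^ α1 : F) ^ (2*(t:ℤ)+1) = ((ξ ^ α1 : F) ^ (4*(t:ℤ)))⁻¹ :=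
      eq_inv_of_mul_eq_one_right hxy
    rw [hyx, one_sum _ hx0 hx1, mid_sum _ hx0 hx1, ← hyx]
    have hfin : (ξ ^ α1 : F) ^ (2*(t:ℤ)+1) = ξ ^ α3 := by
      rw [show (2*(t:ℤ)+1) = ((2*t+1:ℕ):ℤ) by push_cast; ring, zpow_natCast, ← pow_mul]
      have hmodeq : α1*(2*t+1) ≡ α3 [MOD n] := by
        rw [Nat.modEq_iff_dvd]
        apply hcop6.dvd_of_dvd_mul_left
        have e3 : (n:ℤ) ∣ (1:ℤ) - ((α1*2:ℕ):ℤ) := Nat.modEq_iff_dvd.mp hα1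
        have e4 : (n:ℤ) ∣ (1:ℤ) - ((α3*3:ℕ):ℤ) := Nat.modEq_iff_dvd.mp hα3
        have key : (6:ℤ) * (((α3:ℕ):ℤ) - ((α1*(2*t+1) : ℕ):ℤ)) =
            (3*(2*(t:ℤ)+1)) * ((1:ℤ) - ((α1*2:ℕ):ℤ)) -
            2 * ((1:ℤ) - ((α3*3:ℕ):ℤ)) - (n:ℤ) := by
          rw [hnZ]; push_cast; ring
        rw [key]
        exact dvd_sub (dvd_sub (e3.mul_left _) (e4.mul_left _)) dvd_rfl
      have hmodeq' : α1*(2*t+1) % n = α3 % n := hmodeq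
      rw [hpm (α1*(2*t+1)), hpm α3, hmodeq']
    rw [hfin]
    ring
  · -- case n ≡ 5 (mod 6)
    intro hmod
    obtain ⟨t, htn⟩ : ∃ t, n = 6*t+5 := ⟨n/6, by omega⟩
    have ht16 : 15 ≤ t := by omega
    have hnZ : (n:ℤ) = 6*(t:ℤ)+5 := by rw [htn]; push_cast; ring
    have ht0 : (0:ℤ) ≤ (t:ℤ) := by positivity
    have ht16' : (15:ℤ) ≤ (t:ℤ) := by exact_mod_cast ht16
    have hr1 : hj.r 1 = 2*(t:ℤ)+1 := by
      have hcong := hj.r_one_cong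
      have hdv : (n:ℤ) ∣ 3 * (hj.r 1 - (2*(t:ℤ)+1)) := by
        have heq : 3 * (hj.r 1 - (2*(t:ℤ)+1)) =
            (((2:ℕ):ℤ) + hj.r 1 * ((3:ℕ):ℤ)) - 1 * (n:ℤ) := by
          rw [hnZ]; push_cast; ring
        rw [heq]
        exact dvd_sub hcong ⟨1, by ring⟩
      obtain ⟨d, hd⟩ := hcop3.dvd_of_dvd_mul_left hdv
      have h1 := hj.r_one_pos
      have h2 := hj.r_one_lt
      have hd0 : d = 0 := by
        rcases lt_trichotomy d 0 with h | h | h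
        · have hb : (n:ℤ) * d ≤ (n:ℤ) * (-1) :=
            mul_le_mul_of_nonneg_left (by omega) (by positivity)
          rw [hnZ] at *
          linarith
        · exact h
        · have hb : (n:ℤ) * 1 ≤ (n:ℤ) * d :=
            mul_le_mul_of_nonneg_left (by omega) (by positivity)
          rw [hnZ] at *
          linarith
      rw [hd0, mul_zero] at hd
      linarith
    have hnne : (n:ℤ) ≠ 0 := by rw [hnZ]; omega
    have hμ1 : hj.μ 1 = 1 := by
      apply mul_left_cancel₀ hnne
      rw [hj.mu_one, hr1, hnZ]; push_cast; ring
    have hb1 : hj.b 1 = 4 := by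
      rw [hj.b_def 1 le_rfl hL1, show (1:ℕ)-1 = 0 from rfl, hj.r_zero, hr1, hnZ]
      exact ceilQ _ _ 4 (by omega) (by omega) (by omega)
    have hr2 : hj.r 2 = 2*(t:ℤ) - 1 := by
      have hrec := hj.r_rec 1 le_rfl hL1
      rw [show (1:ℕ)-1 = 0 from rfl, hj.r_zero, hr1, hb1, hnZ] at hrec
      norm_num at hrec; omega
    have hL2 : 2 ≤ hj.L := by
      by_contra h
      have hL1' : hj.L = 1 := by omega
      have htz := hj.r_top
      rw [hL1', show (1:ℕ)+1 = 2 from rfl, hr2] at htz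
      omega
    have hμ2 : hj.μ 2 = 1 := by
      have hrec := hj.mu_rec 1 le_rfl hL1
      rw [show (1:ℕ)-1 = 0 from rfl, hj.mu_zero, hμ1, hb1] at hrec
      norm_num at hrec; omega
    have hb2 : hj.b 2 = 2 := by
      rw [hj.b_def 2 (by omega) hL2, show (2:ℕ)-1 = 1 from rfl, hr1, hr2]
      exact ceilQ _ _ 2 (by omega) (by omega) (by omega)
    have hr3 : hj.r 3 = 2*(t:ℤ) - 3 := by
      have hrec := hj.r_rec 2 (by omega) hL2
      rw [show (2:ℕ)-1 = 1 from rfl, hr1, hr2, hb2] at hrec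
      norm_num at hrec; omega
    have hμ3 : hj.μ 3 = 1 := by
      have hrec := hj.mu_rec 2 (by omega) hL2
      rw [show (2:ℕ)-1 = 1 from rfl, hμ1, hμ2, hb2] at hrec
      norm_num at hrec; omega
    obtain ⟨hfull, hL, hμL1⟩ := hj_struct hj t (by omega) hr2 hr3 hμ2 hμ3
    have hmuall : ∀ l : ℕ, 1 ≤ l → l ≤ hj.L → hj.μ l = 1 := by
      intro l hl1 hl2
      rcases eq_or_lt_of_le hl1 with h | h
      · rw [← h]; exact hμ1
      · exact (hfull l (by omega) hl2).2
    refine ⟨by rw [hj.mu_zero]; norm_num, hmuall, hμL1, ?_⟩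
    have htr := trace_eval hj (ξ ^ α1) t (by omega) hL hfull hχ0
      (fun m hm hmle => hχpow m hm (by omega))
    rw [htr]
    have hT : ∀ k : ℕ, TrTerm hj (ξ ^ α1 : F) 1 k =
        1 / (1 - (ξ ^ α1 : F) ^ (-(hj.r 1))) +
        (ξ ^ α1 : F) ^ (-(hj.r 2) * (hj.μ 1 - (k : ℤ)) + hj.r 1 * hj.μ 2) /
          (1 - (ξ ^ α1 : F) ^ (hj.r 1)) := fun k => if_pos rfl
    rw [hμ1, show ((1:ℤ)).toNat = 1 from rfl, Finset.Icc_self, Finset.sum_singleton,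
      hT 1, hμ1, hμ2, hr1, hr2]
    have e1 : -(2*(t:ℤ)-1) * (1 - ((1:ℕ):ℤ)) + (2*(t:ℤ)+1) * 1 = 2*(t:ℤ)+1 := by
      push_cast; ring
    rw [e1, zpow_neg]
    have hx0 : ((ξ ^ α1 : F) ^ (2*(t:ℤ)+1)) ≠ 0 := zpow_ne_zero _ hχ0
    have hx1 : ((ξ ^ α1 : F) ^ (2*(t:ℤ)+1)) ≠ 1 := hχpow _ (by omega) (by omega)
    rw [mid_sum _ hx0 hx1]
    ring
end
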